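/- On the Poisson algebra ℂ(x_1,...,x_g)[y_1,...,y_g] with brackets {x_α, y_β} = −2Π(x_α)δ_{αβ}, {x_α, x_β} = 0, {y_α, y_β} = 0, where Π(X) = ∏_{i=1}^{g+3}(X − a_i), the generating series X(t) = ∑_α 1/(t − x_α) and Y(t) = ∑_α (y_α/Π(x_α))/(t − x_α) (as formal series in t^{-1}) satisfy {Y(t), X(s)} = 2 ∂_s((X(s) − X(t))/(s − t)). -/

import Mathlib

open Finset

/-- Partial derivative in the variable `x_α` of a function `F(x, y)` on `ℂ^g × ℂ^g`. -/
noncomputable def pdx (g : ℕ) (F : (Fin g → ℂ) → (Fin g → ℂ) → ℂ) (α : Fin g)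
    (x y : Fin g → ℂ) : ℂ :=
  deriv (fun z => F (Function.update x α z) y) (x α)

/-- Partial derivative in the variable `y_α` of a function `F(x, y)` on `ℂ^g × ℂ^g`. -/
noncomputable def pdy (g : ℕ) (F : (Fin g → ℂ) → (Fin g → ℂ) → ℂ) (α : Fin g)
    (x y : Fin g → ℂ) : ℂ :=
  deriv (fun z => F x (Function.update y α z)) (y α)

/-- The Poisson bracket on functions of `(x, y)` determined by
`{x_α, y_β} = -2 Π(x_α) δ_{αβ}`, `{x_α, x_β} = {y_α, y_β} = 0`, where
`Π(X) = ∏_{i=1}^{g+3} (X - a_i)`. -/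
noncomputable def PB (g : ℕ) (a : Fin (g+3) → ℂ)
    (F G : (Fin g → ℂ) → (Fin g → ℂ) → ℂ) (x y : Fin g → ℂ) : ℂ :=
  ∑ α, (-2 * ∏ i, (x α - a i)) *
    (pdx g F α x y * pdy g G α x y - pdy g F α x y * pdx g G α x y)

/-- in the Poisson algebra `ℂ(x₁,…,x_g)[y₁,…,y_g]` with
`{x_α, y_β} = -2Π(x_α)δ_{αβ}`, the generating series `X(t) = ∑_α 1/(t - x_α)` and
`Y(t) = ∑_α (y_α/Π(x_α))/(t - x_α)` satisfy
`{Y(t), X(s)} = 2 ∂_s((X(s) - X(t))/(s - t))` (stated pointwise away from the poles). -/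
theorem stmt_10 (g : ℕ) (hg : 1 ≤ g) (a : Fin (g+3) → ℂ) (ha : Function.Injective a) :
    ∀ x y : Fin g → ℂ, Function.Injective x → (∀ α i, x α ≠ a i) →
    ∀ s t : ℂ, s ≠ t → (∀ α, s ≠ x α) → (∀ α, t ≠ x α) →
      PB g a (fun x' y' => ∑ α, (y' α / ∏ i, (x' α - a i)) / (t - x' α))
             (fun x' _ => ∑ α, (s - x' α)⁻¹) x y
        = 2 * deriv (fun σ => ((∑ α, (σ - x α)⁻¹) - ∑ α, (t - x α)⁻¹) / (σ - t)) s := by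
  intro x y hxinj hxa s t hst hsx htx
  have hP : ∀ α : Fin g, (∏ i, (x α - a i)) ≠ 0 := fun α =>
    Finset.prod_ne_zero_iff.2 fun i _ => sub_ne_zero.2 (hxa α i)
  have hs' : ∀ α, s - x α ≠ 0 := fun α => sub_ne_zero.2 (hsx α)
  have ht' : ∀ α, t - x α ≠ 0 := fun α => sub_ne_zero.2 (htx α)
  -- pdy of G is 0
  have hpdyG : ∀ α, pdy g (fun x' _ => ∑ β, (s - x' β)⁻¹) α x y = 0 := by
    intro α
    simp [pdy]
  -- pdx of G
  have hpdxG : ∀ α, pdx g (fun x' _ => ∑ β, (s - x' β)⁻¹) α x y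
      = -(-1) / (s - x α) ^ 2 := by
    intro α
    have h : HasDerivAt (fun z => ∑ β, (s - Function.update x α z β)⁻¹)
        (∑ β, if β = α then -(-1) / (s - x α) ^ 2 else 0) (x α) := by
      refine HasDerivAt.fun_sum fun β _ => ?_
      rcases eq_or_ne β α with rfl | hβ
      · simp only [if_pos rfl, Function.update_self]
        have hc : HasDerivAt (fun z : ℂ => s - z) (-1) (x β) := by
          simpa using (hasDerivAt_const (x β) s).fun_sub (hasDerivAt_id (x β))
        exact hc.inv (hs' β)
      · simp only [if_neg hβ, Function.update_of_ne hβ]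
        exact hasDerivAt_const _ _
    have := h.deriv
    simpa [pdx, Finset.sum_ite_eq'] using this
  -- pdy of F
  have hpdyF : ∀ α, pdy g
      (fun x' y' => ∑ β, (y' β / ∏ i, (x' β - a i)) / (t - x' β)) α x y
      = 1 / (∏ i, (x α - a i)) / (t - x α) := by
    intro α
    have h : HasDerivAt
        (fun z => ∑ β, (Function.update y α z β / ∏ i, (x β - a i)) / (t - x β))
        (∑ β, if β = α then 1 / (∏ i, (x α - a i)) / (t - x α) else 0) (y α) := by
      refine HasDerivAt.fun_sum fun β _ => ?_
      rcases eq_or_ne β α with rfl | hβ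
      · simp only [if_pos rfl, Function.update_self]
        exact ((hasDerivAt_id (y β)).div_const _).div_const _
      · simp only [if_neg hβ, Function.update_of_ne hβ]
        exact hasDerivAt_const _ _
    have := h.deriv
    simpa [pdy, Finset.sum_ite_eq'] using this
  -- the RHS derivative
  have hder : deriv (fun σ => ((∑ α, (σ - x α)⁻¹) - ∑ α, (t - x α)⁻¹) / (σ - t)) s
      = ∑ β, -(-1 / (s - x β) ^ 2 * (t - x β)⁻¹) := by
    have hev : (fun σ => ((∑ α, (σ - x α)⁻¹) - ∑ α, (t - x α)⁻¹) / (σ - t))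
        =ᶠ[nhds s] (fun σ => ∑ β, -((σ - x β)⁻¹ * (t - x β)⁻¹)) := by
      have h1 : ∀ᶠ σ in nhds s, σ ≠ t := eventually_ne_nhds hst
      have h2 : ∀ᶠ σ in nhds s, ∀ β, σ ≠ x β :=
        Filter.eventually_all.2 fun β => eventually_ne_nhds (hsx β)
      filter_upwards [h1, h2] with σ hσt hσx
      rw [← Finset.sum_sub_distrib, Finset.sum_div]
      refine Finset.sum_congr rfl fun β _ => ?_
      have h3 : σ - x β ≠ 0 := sub_ne_zero.2 (hσx β)
      have h4 : σ - t ≠ 0 := sub_ne_zero.2 hσt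
      have h5 : t - x β ≠ 0 := ht' β
      field_simp
      ring
    rw [hev.deriv_eq]
    have h : HasDerivAt (fun σ => ∑ β, -((σ - x β)⁻¹ * (t - x β)⁻¹))
        (∑ β, -(-1 / (s - x β) ^ 2 * (t - x β)⁻¹)) s := by
      refine HasDerivAt.fun_sum fun β _ => ?_
      have hc : HasDerivAt (fun σ : ℂ => σ - x β) 1 s := by
        simpa using (hasDerivAt_id s).sub_const (x β)
      exact ((hc.inv (hs' β)).mul_const _).neg
    exact h.deriv
  rw [hder, PB, Finset.mul_sum]
  refine Finset.sum_congr rfl fun α _ => ?_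
  rw [hpdyG α, hpdxG α, hpdyF α, mul_zero]
  have h1 := hP α
  have h2 := hs' α
  have h3 := ht' α
  field_simp
  ring
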